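/- Let H be a linear s-uniform hypergraph on a vertex set V, let G be a graph on V with an injective map h from the edge set of G to the hyperedges of H such that both endpoints of each edge e of G lie in h(e), and let Γ be a graph on V such that both endpoints of every edge of Γ lie in some common hyperedge of H. Let the edges of Γ be colored with k colors. Suppose Q = v_0 v_1 … v_{ℓ−1} is a good cycle of length ℓ in G such that for every edge v_i v_{i+1} of Q there is a cycle D_i of length 5 in Γ which is an induced subgraph of Γ, all of whose vertices lie in h(v_i v_{i+1}), on which v_i and v_{i+1} are at distance 2, and such that all edges of all the cycles D_i receive the same color. Then for every integer t with 2ℓ ≤ t ≤ 3ℓ, Γ contains a monochromatic cycle of length t which is an induced subgraph of Γ. -/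

import Mathlib

open SimpleGraph

/-- A path (walk) `P` in `G` is good with respect to the hypergraph `H` and the
assignment `h` of hyperedges to edges. -/
def IsGoodPath {V : Type*} [DecidableEq V] (H : Set (Finset V))
    {G : SimpleGraph V} (h : Sym2 V → Finset V) {u v : V} (P : G.Walk u v) : Prop :=
  (∀ e ∈ P.edges, ∀ e' ∈ P.edges, e ≠ e' →
      ∀ x : V, (x ∈ h e ∧ x ∈ h e') ↔ (x ∈ e ∧ x ∈ e')) ∧
  (∀ f ∈ H, (∀ e ∈ P.edges, f ≠ h e) →
      ∀ x y : V, x ∈ f → y ∈ f →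
        (∃ e ∈ P.edges, x ∈ h e) → (∃ e' ∈ P.edges, y ∈ h e') → x = y)

/-- A cycle `Q` in `G` is good if every pair of its edges is contained in a good
subpath of `Q` (a subpath being an initial segment of a rotation of `Q`). -/
def IsGoodCycle {V : Type*} [DecidableEq V] (H : Set (Finset V))
    {G : SimpleGraph V} (h : Sym2 V → Finset V) {v : V} (Q : G.Walk v v) : Prop :=
  Q.IsCycle ∧
  ∀ e ∈ Q.edges, ∀ e' ∈ Q.edges,
    ∃ (a : V) (ha : a ∈ Q.support) (b : V) (hb : b ∈ (Q.rotate a ha).support),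
      ((Q.rotate a ha).takeUntil b hb).IsPath ∧
      IsGoodPath H h ((Q.rotate a ha).takeUntil b hb) ∧
      e ∈ ((Q.rotate a ha).takeUntil b hb).edges ∧
      e' ∈ ((Q.rotate a ha).takeUntil b hb).edges

section Helpers

variable {V : Type} {G : SimpleGraph V}

lemma walk_support_eq {u v : V} (p : G.Walk u v) :
    p.support = (List.range (p.length + 1)).map p.getVert := by
  induction p with
  | nil => simp [SimpleGraph.Walk.getVert]
  | cons h p ih =>
    rw [SimpleGraph.Walk.support_cons, ih, SimpleGraph.Walk.length_cons,
      List.range_succ_eq_map (n := p.length + 1), List.map_cons, List.map_map]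
    refine congrArg₂ List.cons (SimpleGraph.Walk.getVert_zero _).symm ?_
    refine List.map_congr_left fun j hj => ?_
    exact (SimpleGraph.Walk.getVert_cons_succ p h).symm

lemma walk_edges_eq {u v : V} (p : G.Walk u v) :
    p.edges = (List.range p.length).map (fun j => s(p.getVert j, p.getVert (j+1))) := by
  induction p with
  | nil => simp
  | cons h p ih =>
    rw [SimpleGraph.Walk.edges_cons, ih, SimpleGraph.Walk.length_cons,
      List.range_succ_eq_map (n := p.length), List.map_cons, List.map_map]
    refine congrArg₂ List.cons ?_ ?_
    · rw [SimpleGraph.Walk.getVert_cons_succ, SimpleGraph.Walk.getVert_zero,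
        SimpleGraph.Walk.getVert_zero]
    · refine List.map_congr_left fun j hj => ?_
      simp only [Function.comp_apply]
      rw [SimpleGraph.Walk.getVert_cons_succ, SimpleGraph.Walk.getVert_cons_succ]

lemma mem_edges_getVert {u v : V} (p : G.Walk u v) {j : ℕ} (hj : j < p.length) :
    s(p.getVert j, p.getVert (j+1)) ∈ p.edges := by
  rw [walk_edges_eq]
  exact List.mem_map.2 ⟨j, List.mem_range.2 hj, rfl⟩

lemma cycle_getVert_inj {u : V} {p : G.Walk u u} (hp : p.IsCycle) {i j : ℕ}
    (hi : i < p.length) (hj : j < p.length) (hij : p.getVert i = p.getVert j) : i = j := by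
  obtain ⟨-, hnil, hnodup⟩ := (SimpleGraph.Walk.isCycle_def p).mp hp
  have hsupp := walk_support_eq p
  rw [List.range_succ_eq_map, List.map_cons, List.map_map] at hsupp
  rw [hsupp, List.tail_cons] at hnodup
  have hinj1 : ∀ x ∈ List.range p.length, ∀ y ∈ List.range p.length,
      p.getVert (x+1) = p.getVert (y+1) → x = y := by
    intro x hx y hy hxy
    exact List.inj_on_of_nodup_map hnodup hx hy hxy
  have h0 : p.getVert 0 = p.getVert p.length := by
    rw [SimpleGraph.Walk.getVert_zero, SimpleGraph.Walk.getVert_length]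
  rcases Nat.eq_zero_or_pos i with rfl | hi0
  · rcases Nat.eq_zero_or_pos j with rfl | hj0
    · rfl
    · exfalso
      rw [h0] at hij
      have : p.length - 1 = j - 1 := by
        refine hinj1 _ (List.mem_range.2 (by omega)) _ (List.mem_range.2 (by omega)) ?_
        rw [show p.length - 1 + 1 = p.length by omega, show j - 1 + 1 = j by omega]
        exact hij
      omega
  · rcases Nat.eq_zero_or_pos j with rfl | hj0
    · exfalso
      rw [h0] at hij
      have : i - 1 = p.length - 1 := by
        refine hinj1 _ (List.mem_range.2 (by omega)) _ (List.mem_range.2 (by omega)) ?_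
        rw [show p.length - 1 + 1 = p.length by omega, show i - 1 + 1 = i by omega]
        exact hij
      omega
    · have : i - 1 = j - 1 := by
        refine hinj1 _ (List.mem_range.2 (by omega)) _ (List.mem_range.2 (by omega)) ?_
        rw [show i - 1 + 1 = i by omega, show j - 1 + 1 = j by omega]
        exact hij
      omega

def walkOfFn (Γ : SimpleGraph V) (f : ℕ → V) (st : ℕ) :
    (n : ℕ) → (∀ j, st ≤ j → j < st + n → Γ.Adj (f j) (f (j+1))) → Γ.Walk (f st) (f (st + n))
  | 0, _ => SimpleGraph.Walk.nil
  | n+1, hadj => (walkOfFn Γ f st n (fun j h1 h2 => hadj j h1 (by omega))).concat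
      (hadj (st + n) (by omega) (by omega))

lemma walkOfFn_support (Γ : SimpleGraph V) (f : ℕ → V) (st : ℕ) (n : ℕ) (hadj) :
    (walkOfFn Γ f st n hadj).support = (List.range' st (n+1)).map f := by
  induction n with
  | zero => simp [walkOfFn]
  | succ n ih =>
    rw [walkOfFn, SimpleGraph.Walk.support_concat, ih, List.range'_concat (n := n+1),
      List.map_append]
    simp

lemma walkOfFn_edges (Γ : SimpleGraph V) (f : ℕ → V) (st : ℕ) (n : ℕ) (hadj) :
    (walkOfFn Γ f st n hadj).edges = (List.range' st n).map (fun j => s(f j, f (j+1))) := by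
  induction n with
  | zero => simp [walkOfFn]
  | succ n ih =>
    rw [walkOfFn, SimpleGraph.Walk.edges_concat, ih, List.range'_concat (n := n),
      List.map_append, List.concat_eq_append]
    simp
    exact Or.inl rfl

lemma walkOfFn_length (Γ : SimpleGraph V) (f : ℕ → V) (st : ℕ) (n : ℕ) (hadj) :
    (walkOfFn Γ f st n hadj).length = n := by
  induction n with
  | zero => rfl
  | succ n ih => rw [walkOfFn, SimpleGraph.Walk.length_concat, ih]

end Helpers

/-- Lemma 5.6 part 2) of the paper: given a good cycle of length `ℓ` in the auxiliary
graph `G`, each of whose edges comes from a monochromatic induced `5`-cycle (of one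
common color) inside its assigned hyperedge with the two endpoints at distance `2`
on that `5`-cycle, the host graph `Γ` contains a monochromatic induced cycle of
length `t` for every `t` with `2ℓ ≤ t ≤ 3ℓ`. -/
theorem good_cycle_to_induced_cycle_odd {V : Type} [DecidableEq V] (s k : ℕ)
    (H : Set (Finset V))
    (huniform : ∀ e ∈ H, e.card = s)
    (hlinear : ∀ e ∈ H, ∀ f ∈ H, e ≠ f → (e ∩ f).card ≤ 1)
    (G : SimpleGraph V) (h : Sym2 V → Finset V)
    (hmem : ∀ e ∈ G.edgeSet, h e ∈ H ∧ ∀ x ∈ e, x ∈ h e)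
    (hinj : Set.InjOn h G.edgeSet)
    (Γ : SimpleGraph V)
    (hΓ : ∀ x y : V, Γ.Adj x y → ∃ f ∈ H, x ∈ f ∧ y ∈ f)
    (c : Sym2 V → Fin k)
    (v : V) (Q : G.Walk v v) (ℓ : ℕ) (hℓ : Q.length = ℓ)
    (hQ : IsGoodCycle H h Q)
    (κ : Fin k)
    (hD : ∀ x y : V, s(x, y) ∈ Q.edges →
      ∃ D : Γ.Walk x x, D.IsCycle ∧ D.length = 5 ∧ D.getVert 2 = y ∧
        (∀ z ∈ D.support, z ∈ h s(x, y)) ∧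
        (∀ a ∈ D.support, ∀ b ∈ D.support, Γ.Adj a b → s(a, b) ∈ D.edges) ∧
        (∀ p ∈ D.edges, c p = κ))
    (t : ℕ) (ht1 : 2 * ℓ ≤ t) (ht2 : t ≤ 3 * ℓ) :
    ∃ (a : V) (W : Γ.Walk a a), W.IsCycle ∧ W.length = t ∧
      (∀ p ∈ W.edges, ∀ q ∈ W.edges, c p = c q) ∧
      (∀ x ∈ W.support, ∀ y ∈ W.support, Γ.Adj x y → s(x, y) ∈ W.edges) := by
  classical
  obtain ⟨hQtrail, hQnil, hQnodup⟩ := (Walk.isCycle_def Q).mp hQ.1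
  have hl3 : 3 ≤ ℓ := hℓ ▸ hQ.1.three_le_length
  have hvs0 : Q.getVert 0 = v := Q.getVert_zero
  have hvsl : Q.getVert ℓ = v := by rw [← hℓ]; exact Q.getVert_length
  -- injectivity of the vertices of Q
  have hvs_inj : ∀ i, i < ℓ → ∀ j, j < ℓ → Q.getVert i = Q.getVert j → i = j := by
    intro i hi j hj hij
    exact cycle_getVert_inj hQ.1 (by omega) (by omega) hij
  -- edges of Q
  have hedge_mem : ∀ i, i < ℓ → s(Q.getVert i, Q.getVert (i+1)) ∈ Q.edges := by
    intro i hi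
    exact mem_edges_getVert Q (by omega)
  have hedge_inj : ∀ i, i < ℓ → ∀ j, j < ℓ →
      s(Q.getVert i, Q.getVert (i+1)) = s(Q.getVert j, Q.getVert (j+1)) → i = j := by
    intro i hi j hj hij
    rw [Sym2.eq_iff] at hij
    rcases hij with ⟨h1, -⟩ | ⟨h1, h2⟩
    · exact hvs_inj i hi j hj h1
    · -- Q.getVert i = Q.getVert (j+1) and Q.getVert (i+1) = Q.getVert j
      rcases Nat.lt_or_ge (j+1) ℓ with hj1 | hj1
      · have hij' : i = j + 1 := hvs_inj i hi (j+1) hj1 h1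
        rcases Nat.lt_or_ge (i+1) ℓ with hi1 | hi1
        · have : i + 1 = j := hvs_inj (i+1) hi1 j hj h2
          omega
        · have hi1' : i + 1 = ℓ := by omega
          have heq0 : Q.getVert 0 = Q.getVert j := by
            calc Q.getVert 0 = v := hvs0
              _ = Q.getVert ℓ := hvsl.symm
              _ = Q.getVert (i+1) := by rw [hi1']
              _ = Q.getVert j := h2
          have := hvs_inj 0 (by omega) j hj heq0
          omega
      · have hj1' : j + 1 = ℓ := by omega
        have heq0 : Q.getVert i = Q.getVert 0 := by
          calc Q.getVert i = Q.getVert (j+1) := h1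
            _ = Q.getVert ℓ := by rw [hj1']
            _ = v := hvsl
            _ = Q.getVert 0 := hvs0.symm
        have h0 : i = 0 := hvs_inj i hi 0 (by omega) heq0
        rcases Nat.lt_or_ge (i+1) ℓ with hi1 | hi1
        · have : i + 1 = j := hvs_inj (i+1) hi1 j hj h2
          omega
        · omega
  have hvs_mem : ∀ i, i < ℓ → Q.getVert i ∈ h s(Q.getVert i, Q.getVert (i+1)) ∧
      Q.getVert (i+1) ∈ h s(Q.getVert i, Q.getVert (i+1)) := by
    intro i hi
    have he := (hmem _ (Q.edges_subset_edgeSet (hedge_mem i hi))).2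
    exact ⟨he _ (Sym2.mem_iff.2 (Or.inl rfl)), he _ (Sym2.mem_iff.2 (Or.inr rfl))⟩
  -- key fact A : distinct hyperedges meet only in the common endpoints
  have keyA : ∀ i, i < ℓ → ∀ p, p < ℓ → i ≠ p → ∀ x : V,
      x ∈ h s(Q.getVert i, Q.getVert (i+1)) → x ∈ h s(Q.getVert p, Q.getVert (p+1)) →
      x = Q.getVert i ∨ x = Q.getVert (i+1) := by
    intro i hi p hp hip x hx1 hx2
    obtain ⟨a, ha, b, hb, hpath, hgood, he1, he2⟩ :=
      hQ.2 _ (hedge_mem i hi) _ (hedge_mem p hp)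
    have hne : s(Q.getVert i, Q.getVert (i+1)) ≠ s(Q.getVert p, Q.getVert (p+1)) := by
      intro hcon; exact hip (hedge_inj i hi p hp hcon)
    have := (hgood.1 _ he1 _ he2 hne x).mp ⟨hx1, hx2⟩
    exact Sym2.mem_iff.1 this.1
  -- key fact B : adjacency in Γ between hyperedge vertices forces a common hyperedge
  have keyB : ∀ i, i < ℓ → ∀ p, p < ℓ → ∀ a b : V,
      a ∈ h s(Q.getVert i, Q.getVert (i+1)) → b ∈ h s(Q.getVert p, Q.getVert (p+1)) →
      Γ.Adj a b → ∃ σ, σ < ℓ ∧ a ∈ h s(Q.getVert σ, Q.getVert (σ+1)) ∧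
        b ∈ h s(Q.getVert σ, Q.getVert (σ+1)) := by
    intro i hi p hp a b ha hb hab
    obtain ⟨aa, haa, bb, hbb, hpath, hgood, he1, he2⟩ :=
      hQ.2 _ (hedge_mem i hi) _ (hedge_mem p hp)
    obtain ⟨F, hFH, haF, hbF⟩ := hΓ a b hab
    by_cases hcase : ∀ e ∈ ((Q.rotate aa haa).takeUntil bb hbb).edges, F ≠ h e
    · exact absurd (hgood.2 F hFH hcase a b haF hbF ⟨_, he1, ha⟩ ⟨_, he2, hb⟩) hab.ne
    · push_neg at hcase
      obtain ⟨e, hePath, heF⟩ := hcase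
      have heQ : e ∈ Q.edges := by
        have h1 := Walk.edges_takeUntil_subset (Q.rotate aa haa) hbb hePath
        exact ((Q.rotate_edges aa haa).perm.mem_iff).mp h1
      have heQ' : ∃ σ, σ < ℓ ∧ e = s(Q.getVert σ, Q.getVert (σ+1)) := by
        rw [walk_edges_eq, hℓ] at heQ
        obtain ⟨σ, hσ, hσe⟩ := List.mem_map.1 heQ
        exact ⟨σ, List.mem_range.1 hσ, hσe.symm⟩
      obtain ⟨σ, hσ, rfl⟩ := heQ'
      exact ⟨σ, hσ, heF ▸ haF, heF ▸ hbF⟩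
    -- extract the 5-cycles
  have hDex : ∀ i : ℕ, ∃ D : Γ.Walk (Q.getVert i) (Q.getVert i), i < ℓ →
      (D.IsCycle ∧ D.length = 5 ∧ D.getVert 2 = Q.getVert (i+1) ∧
      (∀ z ∈ D.support, z ∈ h s(Q.getVert i, Q.getVert (i+1))) ∧
      (∀ a ∈ D.support, ∀ b ∈ D.support, Γ.Adj a b → s(a, b) ∈ D.edges) ∧
      (∀ p ∈ D.edges, c p = κ)) := by
    intro i
    by_cases hi : i < ℓ
    · obtain ⟨D, hp⟩ := hD (Q.getVert i) (Q.getVert (i+1)) (hedge_mem i hi)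
      exact ⟨D, fun _ => hp⟩
    · exact ⟨Walk.nil, fun hcon => absurd hcon hi⟩
  choose Dk hDk using hDex
  have hlen5 : ∀ i, i < ℓ → (Dk i).length = 5 := fun i hi => (hDk i hi).2.1
  have hd0 : ∀ i, (Dk i).getVert 0 = Q.getVert i := fun i => Walk.getVert_zero _
  have hd2 : ∀ i, i < ℓ → (Dk i).getVert 2 = Q.getVert (i+1) := fun i hi => (hDk i hi).2.2.1
  have hd5 : ∀ i, i < ℓ → (Dk i).getVert 5 = Q.getVert i := by
    intro i hi
    have h5 := (Dk i).getVert_length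
    rw [hlen5 i hi] at h5
    exact h5
  have hdinj : ∀ i, i < ℓ → ∀ y, y ≤ 4 → ∀ y', y' ≤ 4 →
      (Dk i).getVert y = (Dk i).getVert y' → y = y' := by
    intro i hi y hy y' hy' hyy
    exact cycle_getVert_inj (hDk i hi).1 (by rw [hlen5 i hi]; omega)
      (by rw [hlen5 i hi]; omega) hyy
  have hdmem : ∀ i, i < ℓ → ∀ y, y ≤ 5 →
      (Dk i).getVert y ∈ h s(Q.getVert i, Q.getVert (i+1)) := by
    intro i hi y hy
    have hs := walk_support_eq (Dk i)
    rw [hlen5 i hi] at hs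
    exact (hDk i hi).2.2.2.1 _
      (by rw [hs]; exact List.mem_map.2 ⟨y, List.mem_range.2 (by omega), rfl⟩)
  -- the five edges of each pentagon, in the orientations we use
  have hE01 : ∀ i, i < ℓ → s(Q.getVert i, (Dk i).getVert 1) ∈ (Dk i).edges := by
    intro i hi
    have := mem_edges_getVert (Dk i) (j := 0) (by rw [hlen5 i hi]; omega)
    rwa [Walk.getVert_zero, show (0:ℕ)+1 = 1 from rfl] at this
  have hE12 : ∀ i, i < ℓ → s((Dk i).getVert 1, Q.getVert (i+1)) ∈ (Dk i).edges := by
    intro i hi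
    have := mem_edges_getVert (Dk i) (j := 1) (by rw [hlen5 i hi]; omega)
    rwa [show (1:ℕ)+1 = 2 from rfl, hd2 i hi] at this
  have hE23 : ∀ i, i < ℓ → s((Dk i).getVert 3, Q.getVert (i+1)) ∈ (Dk i).edges := by
    intro i hi
    have := mem_edges_getVert (Dk i) (j := 2) (by rw [hlen5 i hi]; omega)
    rwa [show (2:ℕ)+1 = 3 from rfl, hd2 i hi, Sym2.eq_swap] at this
  have hE34 : ∀ i, i < ℓ → s((Dk i).getVert 4, (Dk i).getVert 3) ∈ (Dk i).edges := by
    intro i hi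
    have := mem_edges_getVert (Dk i) (j := 3) (by rw [hlen5 i hi]; omega)
    rwa [show (3:ℕ)+1 = 4 from rfl, Sym2.eq_swap] at this
  have hE40 : ∀ i, i < ℓ → s(Q.getVert i, (Dk i).getVert 4) ∈ (Dk i).edges := by
    intro i hi
    have := mem_edges_getVert (Dk i) (j := 4) (by rw [hlen5 i hi]; omega)
    rwa [show (4:ℕ)+1 = 5 from rfl, hd5 i hi, Sym2.eq_swap] at this
  -- the surplus length
  obtain ⟨m, hm1, hm2⟩ : ∃ m, t = 2*ℓ + m ∧ m ≤ ℓ := ⟨t - 2*ℓ, by omega, by omega⟩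
  -- the vertex function of the final cycle
  set f : ℕ → V := fun j =>
    if j < 3*m then
      (if j % 3 = 0 then Q.getVert (j/3)
       else if j % 3 = 1 then (Dk (j/3)).getVert 4
       else (Dk (j/3)).getVert 3)
    else
      (if (j - 3*m) % 2 = 0 then Q.getVert (m + (j - 3*m)/2)
       else (Dk (m + (j - 3*m)/2)).getVert 1) with hf_def
  have hfA : ∀ j, j < 3*m → j % 3 = 0 → f j = Q.getVert (j/3) := by
    intro j h1 h2; simp only [hf_def]; rw [if_pos h1, if_pos h2]
  have hfB : ∀ j, j < 3*m → j % 3 = 1 → f j = (Dk (j/3)).getVert 4 := by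
    intro j h1 h2; simp only [hf_def]; rw [if_pos h1, if_neg (by omega), if_pos h2]
  have hfC : ∀ j, j < 3*m → j % 3 = 2 → f j = (Dk (j/3)).getVert 3 := by
    intro j h1 h2; simp only [hf_def]; rw [if_pos h1, if_neg (by omega), if_neg (by omega)]
  have hfD : ∀ j, 3*m ≤ j → (j - 3*m) % 2 = 0 → f j = Q.getVert (m + (j - 3*m)/2) := by
    intro j h1 h2; simp only [hf_def]; rw [if_neg (by omega), if_pos h2]
  have hfE : ∀ j, 3*m ≤ j → (j - 3*m) % 2 = 1 → f j = (Dk (m + (j - 3*m)/2)).getVert 1 := by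
    intro j h1 h2; simp only [hf_def]; rw [if_neg (by omega), if_neg (by omega)]
  have hfl0 : ∀ i, i < m → f (3*i) = Q.getVert i := by
    intro i hi
    rw [hfA (3*i) (by omega) (by omega), show 3*i/3 = i by omega]
  have hfl1 : ∀ i, i < m → f (3*i+1) = (Dk i).getVert 4 := by
    intro i hi
    rw [hfB (3*i+1) (by omega) (by omega), show (3*i+1)/3 = i by omega]
  have hfl2 : ∀ i, i < m → f (3*i+2) = (Dk i).getVert 3 := by
    intro i hi
    rw [hfC (3*i+2) (by omega) (by omega), show (3*i+2)/3 = i by omega]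
  have hfs0 : ∀ i, m ≤ i → f (3*m + 2*(i-m)) = Q.getVert i := by
    intro i hi
    rw [hfD (3*m + 2*(i-m)) (by omega) (by omega),
      show m + (3*m + 2*(i-m) - 3*m)/2 = i by omega]
  have hfs1 : ∀ i, m ≤ i → f (3*m + 2*(i-m) + 1) = (Dk i).getVert 1 := by
    intro i hi
    rw [hfE (3*m + 2*(i-m) + 1) (by omega) (by omega),
      show m + (3*m + 2*(i-m) + 1 - 3*m)/2 = i by omega]
  have hfl3 : ∀ i, i < m → f (3*i+3) = Q.getVert (i+1) := by
    intro i hi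
    by_cases hi1 : i + 1 < m
    · rw [show 3*i+3 = 3*(i+1) by ring, hfl0 (i+1) hi1]
    · rw [show 3*i+3 = 3*m + 2*(m-m) by omega, hfs0 m le_rfl, show m = i+1 by omega]
  have hfs2 : ∀ i, m ≤ i → f (3*m + 2*(i-m) + 2) = Q.getVert (i+1) := by
    intro i hi
    rw [show 3*m + 2*(i-m) + 2 = 3*m + 2*((i+1)-m) by omega, hfs0 (i+1) (by omega)]
  have hf0 : f 0 = v := by
    rcases Nat.eq_zero_or_pos m with hm0 | hm0
    · rw [hfD 0 (by omega) (by omega), show m + (0 - 3*m)/2 = 0 by omega]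
      exact hvs0
    · rw [hfA 0 (by omega) (by omega)]
      exact hvs0
  have hft : f t = v := by
    rw [show t = 3*m + 2*(ℓ-m) by omega, hfs0 ℓ hm2]
    exact hvsl
    -- every consecutive pair of f-values is an edge of one of the pentagons
  have hstep : ∀ j, j < t → ∃ σ, σ < ℓ ∧ s(f j, f (j+1)) ∈ (Dk σ).edges := by
    intro j hj
    by_cases h3 : j < 3*m
    · rcases (show j % 3 = 0 ∨ j % 3 = 1 ∨ j % 3 = 2 by omega) with hr | hr | hr
      · refine ⟨j/3, by omega, ?_⟩
        rw [hfA j h3 hr, hfB (j+1) (by omega) (by omega), show (j+1)/3 = j/3 by omega]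
        exact hE40 (j/3) (by omega)
      · refine ⟨j/3, by omega, ?_⟩
        rw [hfB j h3 hr, hfC (j+1) (by omega) (by omega), show (j+1)/3 = j/3 by omega]
        exact hE34 (j/3) (by omega)
      · refine ⟨j/3, by omega, ?_⟩
        rw [hfC j h3 hr, show j+1 = 3*(j/3)+3 by omega, hfl3 (j/3) (by omega)]
        exact hE23 (j/3) (by omega)
    · rcases (show (j - 3*m) % 2 = 0 ∨ (j - 3*m) % 2 = 1 by omega) with hr | hr
      · refine ⟨m + (j - 3*m)/2, by omega, ?_⟩
        rw [hfD j (by omega) hr, hfE (j+1) (by omega) (by omega),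
          show m + (j+1-3*m)/2 = m + (j - 3*m)/2 by omega]
        exact hE01 _ (by omega)
      · refine ⟨m + (j - 3*m)/2, by omega, ?_⟩
        rw [hfE j (by omega) hr, show j+1 = 3*m + 2*((m + (j - 3*m)/2 + 1)-m) by omega,
          hfs0 (m + (j - 3*m)/2 + 1) (by omega),
          show m + (j - 3*m)/2 + 1 = (m + (j-3*m)/2) + 1 from rfl]
        exact hE12 _ (by omega)
  have hΓstep : ∀ j, j < t → Γ.Adj (f j) (f (j+1)) := by
    intro j hj
    obtain ⟨σ, hσ, hmem'⟩ := hstep j hj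
    exact Γ.mem_edgeSet.mp ((Dk σ).edges_subset_edgeSet hmem')
  -- representation of each position
  have hrepr : ∀ j, j < t → ∃ i, i < ℓ ∧
      ((f j = Q.getVert i ∧ ((i < m ∧ j = 3*i) ∨ (m ≤ i ∧ j = 3*m + 2*(i-m)))) ∨
       (∃ y, f j = (Dk i).getVert y ∧
         ((i < m ∧ y = 4 ∧ j = 3*i+1) ∨ (i < m ∧ y = 3 ∧ j = 3*i+2) ∨
          (m ≤ i ∧ y = 1 ∧ j = 3*m + 2*(i-m) + 1)))) := by
    intro j hj
    by_cases h3 : j < 3*m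
    · rcases (show j % 3 = 0 ∨ j % 3 = 1 ∨ j % 3 = 2 by omega) with hr | hr | hr
      · exact ⟨j/3, by omega, Or.inl ⟨hfA j h3 hr, Or.inl ⟨by omega, by omega⟩⟩⟩
      · exact ⟨j/3, by omega, Or.inr ⟨4, hfB j h3 hr, Or.inl ⟨by omega, rfl, by omega⟩⟩⟩
      · exact ⟨j/3, by omega, Or.inr ⟨3, hfC j h3 hr, Or.inr (Or.inl ⟨by omega, rfl, by omega⟩)⟩⟩
    · rcases (show (j - 3*m) % 2 = 0 ∨ (j - 3*m) % 2 = 1 by omega) with hr | hr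
      · exact ⟨m + (j-3*m)/2, by omega, Or.inl ⟨hfD j (by omega) hr,
          Or.inr ⟨by omega, by omega⟩⟩⟩
      · exact ⟨m + (j-3*m)/2, by omega, Or.inr ⟨1, hfE j (by omega) hr,
          Or.inr (Or.inr ⟨by omega, rfl, by omega⟩)⟩⟩
  -- interior pentagon vertices are distinct from all cycle vertices
  have hint_vs : ∀ i, i < ℓ → ∀ y, (y = 1 ∨ y = 3 ∨ y = 4) → ∀ p, p < ℓ →
      (Dk i).getVert y ≠ Q.getVert p := by
    intro i hi y hy p hp heq
    by_cases hip : i = p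
    · subst hip
      have : (Dk i).getVert y = (Dk i).getVert 0 := by rw [hd0]; exact heq
      have := hdinj i hi y (by omega) 0 (by omega) this
      omega
    · have h1 : (Dk i).getVert y ∈ h s(Q.getVert i, Q.getVert (i+1)) :=
        hdmem i hi y (by omega)
      have h2 : (Dk i).getVert y ∈ h s(Q.getVert p, Q.getVert (p+1)) := by
        rw [heq]; exact (hvs_mem p hp).1
      rcases keyA i hi p hp hip _ h1 h2 with hc | hc
      · have := hdinj i hi y (by omega) 0 (by omega) (hc.trans (hd0 i).symm)
        omega
      · have := hdinj i hi y (by omega) 2 (by omega) (hc.trans (hd2 i hi).symm)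
        omega
  -- interior pentagon vertices in different pentagons are distinct
  have hint_int : ∀ i, i < ℓ → ∀ i', i' < ℓ → i ≠ i' → ∀ y y',
      (y = 1 ∨ y = 3 ∨ y = 4) → (y' = 1 ∨ y' = 3 ∨ y' = 4) →
      (Dk i).getVert y ≠ (Dk i').getVert y' := by
    intro i hi i' hi' hii y y' hy hy' heq
    have h1 : (Dk i).getVert y ∈ h s(Q.getVert i, Q.getVert (i+1)) := hdmem i hi y (by omega)
    have h2 : (Dk i).getVert y ∈ h s(Q.getVert i', Q.getVert (i'+1)) := by
      rw [heq]; exact hdmem i' hi' y' (by omega)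
    rcases keyA i hi i' hi' hii _ h1 h2 with hc | hc
    · have := hdinj i hi y (by omega) 0 (by omega) (hc.trans (hd0 i).symm)
      omega
    · have := hdinj i hi y (by omega) 2 (by omega) (hc.trans (hd2 i hi).symm)
      omega
  -- injectivity of f on [0, t)
  have finj : ∀ j, j < t → ∀ j', j' < t → f j = f j' → j = j' := by
    intro j hj j' hj' heq
    obtain ⟨i, hi, hc⟩ := hrepr j hj
    obtain ⟨i', hi', hc'⟩ := hrepr j' hj'
    rcases hc with ⟨hv, hpos⟩ | ⟨y, hv, hpos⟩ <;>
      rcases hc' with ⟨hv', hpos'⟩ | ⟨y', hv', hpos'⟩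
    · have : i = i' := hvs_inj i hi i' hi' (by rw [← hv, ← hv', heq])
      subst this
      rcases hpos with ⟨h1, h2⟩ | ⟨h1, h2⟩ <;> rcases hpos' with ⟨h1', h2'⟩ | ⟨h1', h2'⟩ <;> omega
    · exfalso
      refine hint_vs i' hi' y' ?_ i hi ?_
      · rcases hpos' with ⟨_, h, _⟩ | ⟨_, h, _⟩ | ⟨_, h, _⟩ <;> omega
      · rw [← hv', ← heq, hv]
    · exfalso
      refine hint_vs i hi y ?_ i' hi' ?_
      · rcases hpos with ⟨_, h, _⟩ | ⟨_, h, _⟩ | ⟨_, h, _⟩ <;> omega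
      · rw [← hv, heq, hv']
    · by_cases hii : i = i'
      · subst hii
        have hyb : y ≤ 4 := by rcases hpos with ⟨_, h, _⟩ | ⟨_, h, _⟩ | ⟨_, h, _⟩ <;> omega
        have hyb' : y' ≤ 4 := by rcases hpos' with ⟨_, h, _⟩ | ⟨_, h, _⟩ | ⟨_, h, _⟩ <;> omega
        have hyy : y = y' := hdinj i hi y hyb y' hyb' (by rw [← hv, ← hv', heq])
        subst hyy
        rcases hpos with ⟨h1, h2, h3⟩ | ⟨h1, h2, h3⟩ | ⟨h1, h2, h3⟩ <;>
          rcases hpos' with ⟨h1', h2', h3'⟩ | ⟨h1', h2', h3'⟩ | ⟨h1', h2', h3'⟩ <;> omega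
      · exfalso
        refine hint_int i hi i' hi' hii y y' ?_ ?_ (by rw [← hv, ← hv', heq])
        · rcases hpos with ⟨_, h, _⟩ | ⟨_, h, _⟩ | ⟨_, h, _⟩ <;> omega
        · rcases hpos' with ⟨_, h, _⟩ | ⟨_, h, _⟩ | ⟨_, h, _⟩ <;> omega
    -- localization: a vertex of the new cycle lying in hyperedge σ is a pentagon-σ vertex
  have hloc : ∀ σ, σ < ℓ → ∀ j, j < t → f j ∈ h s(Q.getVert σ, Q.getVert (σ+1)) →
      ∃ a, a ≤ 4 ∧ (a = 0 ∨ a = 2 ∨ (σ < m ∧ (a = 3 ∨ a = 4)) ∨ (m ≤ σ ∧ a = 1)) ∧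
        f j = (Dk σ).getVert a := by
    intro σ hσ j hj hjmem
    obtain ⟨i, hi, hc⟩ := hrepr j hj
    rcases hc with ⟨hv, hpos⟩ | ⟨y, hv, hpos⟩
    · by_cases hiσ : i = σ
      · subst hiσ
        exact ⟨0, by omega, Or.inl rfl, by rw [hv, hd0]⟩
      · have h1 : Q.getVert i ∈ h s(Q.getVert σ, Q.getVert (σ+1)) := by rw [← hv]; exact hjmem
        rcases keyA σ hσ i hi (fun hcon => hiσ hcon.symm) _ h1 (hvs_mem i hi).1 with hc2 | hc2
        · exact absurd (hvs_inj i hi σ hσ hc2) hiσ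
        · exact ⟨2, by omega, Or.inr (Or.inl rfl), by rw [hv, hc2, hd2 σ hσ]⟩
    · by_cases hiσ : i = σ
      · subst hiσ
        refine ⟨y, ?_, ?_, hv⟩
        · rcases hpos with ⟨_, h, _⟩ | ⟨_, h, _⟩ | ⟨_, h, _⟩ <;> omega
        · rcases hpos with ⟨h1, h2, _⟩ | ⟨h1, h2, _⟩ | ⟨h1, h2, _⟩
          · exact Or.inr (Or.inr (Or.inl ⟨h1, Or.inr h2⟩))
          · exact Or.inr (Or.inr (Or.inl ⟨h1, Or.inl h2⟩))
          · exact Or.inr (Or.inr (Or.inr ⟨h1, h2⟩))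
      · exfalso
        have h1 : (Dk i).getVert y ∈ h s(Q.getVert i, Q.getVert (i+1)) :=
          hdmem i hi y (by rcases hpos with ⟨_, h, _⟩ | ⟨_, h, _⟩ | ⟨_, h, _⟩ <;> omega)
        have h2 : (Dk i).getVert y ∈ h s(Q.getVert σ, Q.getVert (σ+1)) := by
          rw [← hv]; exact hjmem
        have hyb : y ≤ 4 := by rcases hpos with ⟨_, h, _⟩ | ⟨_, h, _⟩ | ⟨_, h, _⟩ <;> omega
        have hy134 : y = 1 ∨ y = 3 ∨ y = 4 := by
          rcases hpos with ⟨_, h, _⟩ | ⟨_, h, _⟩ | ⟨_, h, _⟩ <;> omega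
        rcases keyA i hi σ hσ hiσ _ h1 h2 with hc2 | hc2
        · have := hdinj i hi y hyb 0 (by omega) (hc2.trans (hd0 i).symm)
          omega
        · have := hdinj i hi y hyb 2 (by omega) (hc2.trans (hd2 i hi).symm)
          omega
  -- two pentagon vertices adjacent in Γ are consecutive on the pentagon
  have hcons : ∀ σ, σ < ℓ → ∀ a b, a ≤ 4 → b ≤ 4 →
      s((Dk σ).getVert a, (Dk σ).getVert b) ∈ (Dk σ).edges →
      (b = a+1 ∨ a = b+1 ∨ (a = 0 ∧ b = 4) ∨ (a = 4 ∧ b = 0)) := by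
    intro σ hσ a b ha hb hmem'
    have he := walk_edges_eq (Dk σ)
    rw [hlen5 σ hσ] at he
    rw [he] at hmem'
    obtain ⟨y, hy, heq⟩ := List.mem_map.1 hmem'
    have hy5 : y < 5 := List.mem_range.1 hy
    rw [Sym2.eq_iff] at heq
    by_cases hy4 : y = 4
    · subst hy4
      have h50 : (Dk σ).getVert (4+1) = (Dk σ).getVert 0 := by
        rw [show (4:ℕ)+1 = 5 from rfl, hd5 σ hσ, hd0]
      rw [h50] at heq
      rcases heq with ⟨h1, h2⟩ | ⟨h1, h2⟩
      · have := hdinj σ hσ 4 (by omega) a ha h1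
        have := hdinj σ hσ 0 (by omega) b hb h2
        omega
      · have := hdinj σ hσ 4 (by omega) b hb h1
        have := hdinj σ hσ 0 (by omega) a ha h2
        omega
    · rcases heq with ⟨h1, h2⟩ | ⟨h1, h2⟩
      · have := hdinj σ hσ y (by omega) a ha h1
        have := hdinj σ hσ (y+1) (by omega) b hb h2
        omega
      · have := hdinj σ hσ y (by omega) b hb h1
        have := hdinj σ hσ (y+1) (by omega) a ha h2
        omega
  -- pentagon vertices are in the pentagon's support
  have hdsup : ∀ σ, σ < ℓ → ∀ a, a ≤ 5 → (Dk σ).getVert a ∈ (Dk σ).support := by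
    intro σ hσ a ha
    have hs := walk_support_eq (Dk σ)
    rw [hlen5 σ hσ] at hs
    rw [hs]
    exact List.mem_map.2 ⟨a, List.mem_range.2 (by omega), rfl⟩
  -- construct the walk
  have ht6 : 6 ≤ t := by omega
  have hadjP : ∀ j, 1 ≤ j → j < 1 + (t-1) → Γ.Adj (f j) (f (j+1)) :=
    fun j h1 h2 => hΓstep j (by omega)
  have hPend : f (1 + (t-1)) = v := by rw [show 1 + (t-1) = t by omega]; exact hft
  have hadj01 : Γ.Adj v (f 1) := by
    have := hΓstep 0 (by omega)
    rwa [hf0] at this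
  refine ⟨v, Walk.cons hadj01 ((walkOfFn Γ f 1 (t-1) hadjP).copy rfl hPend), ?_, ?_, ?_, ?_⟩
  · -- IsCycle
    rw [Walk.cons_isCycle_iff]
    constructor
    · rw [Walk.isPath_def, Walk.support_copy, walkOfFn_support,
        show t - 1 + 1 = t by omega]
      refine List.Nodup.map_on ?_ (List.nodup_range' (s := 1) (n := t))
      intro x hx y hy hxy
      rw [List.mem_range'_1] at hx hy
      by_cases hxt : x = t
      · by_cases hyt : y = t
        · omega
        · exfalso
          subst hxt
          have : f 0 = f y := by rw [hf0, ← hft]; exact hxy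
          have := finj 0 (by omega) y (by omega) this
          omega
      · by_cases hyt : y = t
        · exfalso
          subst hyt
          have : f x = f 0 := by rw [hf0, ← hft]; exact hxy
          have := finj x (by omega) 0 (by omega) this
          omega
        · exact finj x (by omega) y (by omega) hxy
    · intro hmem'
      rw [Walk.edges_copy, walkOfFn_edges] at hmem'
      obtain ⟨j, hj, heq⟩ := List.mem_map.1 hmem'
      rw [List.mem_range'_1] at hj
      rw [Sym2.eq_iff] at heq
      rcases heq with ⟨h1, h2⟩ | ⟨h1, h2⟩
      · have : j = 0 := finj j (by omega) 0 (by omega) (by rw [h1, hf0])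
        omega
      · have hj1 : j = 1 := finj j (by omega) 1 (by omega) h1
        subst hj1
        have : 2 = 0 := finj 2 (by omega) 0 (by omega) (by rw [h2, hf0])
        omega
  · -- length
    rw [Walk.length_cons, Walk.length_copy, walkOfFn_length]
    omega
  · -- monochromatic
    have hmono : ∀ p ∈ (Walk.cons hadj01 ((walkOfFn Γ f 1 (t-1) hadjP).copy rfl hPend)).edges,
        c p = κ := by
      intro p hp
      rw [Walk.edges_cons, Walk.edges_copy, walkOfFn_edges] at hp
      rcases List.mem_cons.1 hp with hp | hp
      · obtain ⟨σ, hσ, hmem'⟩ := hstep 0 (by omega)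
        rw [hf0] at hmem'
        subst hp
        exact (hDk σ hσ).2.2.2.2.2 _ (by rwa [show (0:ℕ)+1 = 1 from rfl] at hmem')
      · obtain ⟨j, hj, heq⟩ := List.mem_map.1 hp
        rw [List.mem_range'_1] at hj
        obtain ⟨σ, hσ, hmem'⟩ := hstep j (by omega)
        subst heq
        exact (hDk σ hσ).2.2.2.2.2 _ hmem'
    intro p hp q hq
    rw [hmono p hp, hmono q hq]
  · -- induced
    intro x hx y hy hxy
    have hWsupp : (Walk.cons hadj01 ((walkOfFn Γ f 1 (t-1) hadjP).copy rfl hPend)).support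
        = v :: (List.range' 1 t).map f := by
      rw [Walk.support_cons, Walk.support_copy, walkOfFn_support, show t - 1 + 1 = t by omega]
    have hWedge_of : ∀ j, j < t →
        s(f j, f (j+1)) ∈ (Walk.cons hadj01 ((walkOfFn Γ f 1 (t-1) hadjP).copy rfl hPend)).edges := by
      intro j hj
      rw [Walk.edges_cons, Walk.edges_copy, walkOfFn_edges]
      rcases Nat.eq_zero_or_pos j with rfl | hj0
      · exact List.mem_cons.2 (Or.inl (by rw [hf0]))
      · exact List.mem_cons.2 (Or.inr (List.mem_map.2
          ⟨j, List.mem_range'_1.2 ⟨hj0, by omega⟩, rfl⟩))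
    have hgetj : ∀ z : V, z ∈ v :: (List.range' 1 t).map f → ∃ j, j < t ∧ z = f j := by
      intro z hz
      rcases List.mem_cons.1 hz with hz | hz
      · exact ⟨0, by omega, by rw [hz, hf0]⟩
      · obtain ⟨j, hj, rfl⟩ := List.mem_map.1 hz
        rw [List.mem_range'_1] at hj
        by_cases hjt : j = t
        · exact ⟨0, by omega, by rw [hjt, hft, hf0]⟩
        · exact ⟨j, by omega, rfl⟩
    rw [hWsupp] at hx hy
    obtain ⟨jx, hjx, rfl⟩ := hgetj x hx
    obtain ⟨jy, hjy, rfl⟩ := hgetj y hy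
    have hhome : ∀ j, j < t → ∃ i, i < ℓ ∧ f j ∈ h s(Q.getVert i, Q.getVert (i+1)) := by
      intro j hj
      obtain ⟨i, hi, hc⟩ := hrepr j hj
      rcases hc with ⟨hv, _⟩ | ⟨y', hv, hpos⟩
      · exact ⟨i, hi, by rw [hv]; exact (hvs_mem i hi).1⟩
      · exact ⟨i, hi, by
          rw [hv]
          exact hdmem i hi y'
            (by rcases hpos with ⟨_,hh,_⟩|⟨_,hh,_⟩|⟨_,hh,_⟩ <;> omega)⟩
    obtain ⟨ix, hix, hxm⟩ := hhome jx hjx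
    obtain ⟨iy, hiy, hym⟩ := hhome jy hjy
    obtain ⟨σ, hσ, hxσ, hyσ⟩ := keyB ix hix iy hiy _ _ hxm hym hxy
    obtain ⟨a, ha4, haA, hxa⟩ := hloc σ hσ jx hjx hxσ
    obtain ⟨b, hb4, hbA, hyb⟩ := hloc σ hσ jy hjy hyσ
    have hxy' : Γ.Adj ((Dk σ).getVert a) ((Dk σ).getVert b) := by
      rw [← hxa, ← hyb]; exact hxy
    have hDedge := (hDk σ hσ).2.2.2.2.1 _ (hdsup σ hσ a (by omega)) _
      (hdsup σ hσ b (by omega)) hxy'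
    have hrel := hcons σ hσ a b ha4 hb4 hDedge
    rw [hxa, hyb]
    have hpair : (σ < m ∧ ((a=0∧b=4)∨(a=4∧b=0)∨(a=4∧b=3)∨(a=3∧b=4)∨(a=3∧b=2)∨(a=2∧b=3))) ∨
        (m ≤ σ ∧ ((a=0∧b=1)∨(a=1∧b=0)∨(a=1∧b=2)∨(a=2∧b=1))) := by
      rcases hrel with hh|hh|⟨hh1,hh2⟩|⟨hh1,hh2⟩ <;>
        rcases haA with h1a|h1a|⟨hma,h1a|h1a⟩|⟨hma,h1a⟩ <;>
        rcases hbA with h2a|h2a|⟨hmb,h2a|h2a⟩|⟨hmb,h2a⟩ <;> omega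
    rcases hpair with ⟨hσm, hc⟩ | ⟨hσm, hc⟩
    · rcases hc with ⟨rfl,rfl⟩|⟨rfl,rfl⟩|⟨rfl,rfl⟩|⟨rfl,rfl⟩|⟨rfl,rfl⟩|⟨rfl,rfl⟩
      · have h1 : (Dk σ).getVert 0 = f (3*σ) := by rw [hfl0 σ hσm]; exact hd0 σ
        have h2 : (Dk σ).getVert 4 = f (3*σ+1) := by rw [hfl1 σ hσm]
        rw [h1, h2]
        exact hWedge_of (3*σ) (by omega)
      · have h1 : (Dk σ).getVert 0 = f (3*σ) := by rw [hfl0 σ hσm]; exact hd0 σ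
        have h2 : (Dk σ).getVert 4 = f (3*σ+1) := by rw [hfl1 σ hσm]
        rw [Sym2.eq_swap, h1, h2]
        exact hWedge_of (3*σ) (by omega)
      · have h1 : (Dk σ).getVert 4 = f (3*σ+1) := by rw [hfl1 σ hσm]
        have h2 : (Dk σ).getVert 3 = f (3*σ+1+1) := by
          rw [show 3*σ+1+1 = 3*σ+2 by omega, hfl2 σ hσm]
        rw [h1, h2]
        exact hWedge_of (3*σ+1) (by omega)
      · have h1 : (Dk σ).getVert 4 = f (3*σ+1) := by rw [hfl1 σ hσm]
        have h2 : (Dk σ).getVert 3 = f (3*σ+1+1) := by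
          rw [show 3*σ+1+1 = 3*σ+2 by omega, hfl2 σ hσm]
        rw [Sym2.eq_swap, h1, h2]
        exact hWedge_of (3*σ+1) (by omega)
      · have h1 : (Dk σ).getVert 3 = f (3*σ+2) := by rw [hfl2 σ hσm]
        have h2 : (Dk σ).getVert 2 = f (3*σ+2+1) := by
          rw [show 3*σ+2+1 = 3*σ+3 by omega, hfl3 σ hσm]; exact hd2 σ hσ
        rw [h1, h2]
        exact hWedge_of (3*σ+2) (by omega)
      · have h1 : (Dk σ).getVert 3 = f (3*σ+2) := by rw [hfl2 σ hσm]
        have h2 : (Dk σ).getVert 2 = f (3*σ+2+1) := by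
          rw [show 3*σ+2+1 = 3*σ+3 by omega, hfl3 σ hσm]; exact hd2 σ hσ
        rw [Sym2.eq_swap, h1, h2]
        exact hWedge_of (3*σ+2) (by omega)
    · rcases hc with ⟨rfl,rfl⟩|⟨rfl,rfl⟩|⟨rfl,rfl⟩|⟨rfl,rfl⟩
      · have h1 : (Dk σ).getVert 0 = f (3*m+2*(σ-m)) := by rw [hfs0 σ hσm]; exact hd0 σ
        have h2 : (Dk σ).getVert 1 = f (3*m+2*(σ-m)+1) := by rw [hfs1 σ hσm]
        rw [h1, h2]
        exact hWedge_of (3*m+2*(σ-m)) (by omega)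
      · have h1 : (Dk σ).getVert 0 = f (3*m+2*(σ-m)) := by rw [hfs0 σ hσm]; exact hd0 σ
        have h2 : (Dk σ).getVert 1 = f (3*m+2*(σ-m)+1) := by rw [hfs1 σ hσm]
        rw [Sym2.eq_swap, h1, h2]
        exact hWedge_of (3*m+2*(σ-m)) (by omega)
      · have h1 : (Dk σ).getVert 1 = f (3*m+2*(σ-m)+1) := by rw [hfs1 σ hσm]
        have h2 : (Dk σ).getVert 2 = f (3*m+2*(σ-m)+1+1) := by
          rw [show 3*m+2*(σ-m)+1+1 = 3*m+2*(σ-m)+2 by omega, hfs2 σ hσm]; exact hd2 σ hσ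
        rw [h1, h2]
        exact hWedge_of (3*m+2*(σ-m)+1) (by omega)
      · have h1 : (Dk σ).getVert 1 = f (3*m+2*(σ-m)+1) := by rw [hfs1 σ hσm]
        have h2 : (Dk σ).getVert 2 = f (3*m+2*(σ-m)+1+1) := by
          rw [show 3*m+2*(σ-m)+1+1 = 3*m+2*(σ-m)+2 by omega, hfs2 σ hσm]; exact hd2 σ hσ
        rw [Sym2.eq_swap, h1, h2]
        exact hWedge_of (3*m+2*(σ-m)+1) (by omega)
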